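/- Let c, λ_d, λ_f, q, α be real numbers and define f_d : ℝ → ℝ on (-1,∞) by f_d(x) = c·(1+x)^{-α}·exp(-q·x²/(1+x)). Then for every real y > -1, f_d(-y/(1+y)) · (1+y)^{-3} · (λ_d/λ_f) = c·(λ_d/λ_f)·(1+y)^{-(3-α)}·exp(-q·y²/(1+y)). In other words, the transformed density is again of power-law-with-exponential-cutoff type, with the same cutoff function and new scaling parameter β = 3-α. -/

import Mathlib

/-- The power-law-with-exponential-cutoff density class is closed under FX inversion:
if `f_d(x) = c (1+x)^{-α} e^{-q x²/(1+x)}` on `(-1,∞)`, then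
`f_d(-y/(1+y)) (1+y)⁻³ (λ_d/λ_f) = c (λ_d/λ_f) (1+y)^{-(3-α)} e^{-q y²/(1+y)}`. -/
theorem power_law_cutoff_density_consistent
    (c lamd lamf q α : ℝ) (fd : ℝ → ℝ)
    (hfd : ∀ x ∈ Set.Ioi (-1 : ℝ),
      fd x = c * (1 + x) ^ (-α) * Real.exp (-q * x ^ 2 / (1 + x)))
    (y : ℝ) (hy : -1 < y) :
    fd (-y / (1 + y)) * (1 + y) ^ (-(3 : ℝ)) * (lamd / lamf) =
      c * (lamd / lamf) * (1 + y) ^ (-(3 - α)) * Real.exp (-q * y ^ 2 / (1 + y)) := by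
  have h1y : (0 : ℝ) < 1 + y := by linarith
  have hne : (1 + y) ≠ 0 := ne_of_gt h1y
  have hx1 : 1 + (-y / (1 + y)) = (1 + y)⁻¹ := by
    field_simp
    ring
  have hmem : (-y / (1 + y)) ∈ Set.Ioi (-1 : ℝ) := by
    have : (0 : ℝ) < (1 + y)⁻¹ := inv_pos.mpr h1y
    simp only [Set.mem_Ioi]
    nlinarith [hx1]
  rw [hfd _ hmem, hx1]
  have harg : -q * (-y / (1 + y)) ^ 2 / (1 + y)⁻¹ = -q * y ^ 2 / (1 + y) := by
    field_simp
  rw [harg]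
  have hpow : ((1 + y)⁻¹) ^ (-α) = (1 + y) ^ α := by
    rw [← Real.rpow_neg_one (1 + y), ← Real.rpow_mul h1y.le]
    norm_num
  rw [hpow]
  have : (1 + y) ^ α * (1 + y) ^ (-(3 : ℝ)) = (1 + y) ^ (-(3 - α)) := by
    rw [← Real.rpow_add h1y]; ring_nf
  rw [← this]; ring
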